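/- Decomposition of the GGT matrix into elementary reflections (Theorem 2.12): for every n ≥ 1 and all Verblunsky coefficients α_0,…,α_{n−1} ∈ ℂ with |α_k| < 1 for 0 ≤ k ≤ n−2 and |α_{n−1}| = 1, one has the matrix identity G(α_0,…,α_{n−1}) = Ξ^{(0)}(γ_0) · Ξ^{(1)}(γ_1) ⋯ Ξ^{(n−1)}(γ_{n−1}), where γ_0,…,γ_{n−1} are the deformed Verblunsky coefficients associated with α_0,…,α_{n−1}. -/

import Mathlib

open MeasureTheory Complex Finset
open scoped Real ComplexConjugate

noncomputable section

/-- `ρ = sqrt(1 - |a|²)`. -/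
def rho (a : ℂ) : ℝ := Real.sqrt (1 - ‖a‖ ^ 2)

/-- The GGT (Hessenberg) matrix associated with Verblunsky coefficients
`α 0, …, α (n-1)`, with the convention `α (-1) = -1`. -/
def GGT (n : ℕ) (α : ℕ → ℂ) : Matrix (Fin n) (Fin n) ℂ :=
  Matrix.of fun i j =>
    if (i : ℕ) ≤ (j : ℕ) then
      -(if (i : ℕ) = 0 then (-1 : ℂ) else α ((i : ℕ) - 1)) * (starRingEnd ℂ) (α (j : ℕ)) *
        ∏ p ∈ Finset.Ico (i : ℕ) (j : ℕ), (rho (α p) : ℂ)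
    else if (i : ℕ) = (j : ℕ) + 1 then (rho (α (j : ℕ)) : ℂ)
    else 0

/-- The elementary reflection matrix `Ξ^{(k)}(γ) = Id_k ⊕ Ξ(γ) ⊕ Id_{n-k-2}` where
`Ξ(γ) = [[γ, ρ e^{iφ}], [ρ, -conj(γ) e^{iφ}]]`, `ρ = sqrt(1-|γ|²)`,
`e^{iφ} = (1-γ)/(1-conj γ)`.  For `k = n-1` only the `(k,k)` entry `γ` remains,
so this also encodes `Ξ^{(n-1)}(γ) = Id_{n-1} ⊕ (γ)`. -/
def XiMat (n k : ℕ) (γ : ℂ) : Matrix (Fin n) (Fin n) ℂ :=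
  Matrix.of fun i j =>
    if (i : ℕ) = k ∧ (j : ℕ) = k then γ
    else if (i : ℕ) = k ∧ (j : ℕ) = k + 1 then
      (rho γ : ℂ) * ((1 - γ) / (1 - (starRingEnd ℂ) γ))
    else if (i : ℕ) = k + 1 ∧ (j : ℕ) = k then (rho γ : ℂ)
    else if (i : ℕ) = k + 1 ∧ (j : ℕ) = k + 1 then
      -(starRingEnd ℂ) γ * ((1 - γ) / (1 - (starRingEnd ℂ) γ))
    else if i = j then 1 else 0

/-- `e^{iφ}` associated to a deformed Verblunsky coefficient. -/
def eC (z : ℂ) : ℂ := (1 - z) / (1 - (starRingEnd ℂ) z)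

/-- The "tail" factor appearing in the entries of partial products of reflections. -/
def Tf (γ : ℕ → ℂ) (i j : ℕ) : ℂ :=
  (if i = 0 then 1 else -(starRingEnd ℂ) (γ (i - 1)) * eC (γ (i - 1))) *
    ∏ p ∈ Finset.Ico i j, (eC (γ p) * (rho (γ p) : ℂ))

/-- The partial product `Ξ⁽⁰⁾(γ₀) ⋯ Ξ⁽ᵐ⁻¹⁾(γ_{m-1})` in closed form. -/
def Qmat (n : ℕ) (γ : ℕ → ℂ) (m : ℕ) : Matrix (Fin n) (Fin n) ℂ :=
  Matrix.of fun i j =>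
    if (j : ℕ) < m then
      if (i : ℕ) ≤ (j : ℕ) then Tf γ (i : ℕ) (j : ℕ) * γ (j : ℕ)
      else if (i : ℕ) = (j : ℕ) + 1 then (rho (γ (j : ℕ)) : ℂ) else 0
    else if (j : ℕ) = m then (if (i : ℕ) ≤ m then Tf γ (i : ℕ) m else 0)
    else if i = j then 1 else 0

lemma Xi_mm {n m : ℕ} {γ : ℂ} {k j : Fin n} (hk : (k : ℕ) = m) (hj : (j : ℕ) = m) :
    XiMat n m γ k j = γ := by
  simp only [XiMat, Matrix.of_apply]; rw [if_pos ⟨hk, hj⟩]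

lemma Xi_mm1 {n m : ℕ} {γ : ℂ} {k j : Fin n} (hk : (k : ℕ) = m) (hj : (j : ℕ) = m + 1) :
    XiMat n m γ k j = (rho γ : ℂ) * eC γ := by
  simp only [XiMat, Matrix.of_apply, eC]
  rw [if_neg (by rintro ⟨-, h⟩; omega), if_pos ⟨hk, hj⟩]

lemma Xi_m1m {n m : ℕ} {γ : ℂ} {k j : Fin n} (hk : (k : ℕ) = m + 1) (hj : (j : ℕ) = m) :
    XiMat n m γ k j = (rho γ : ℂ) := by
  simp only [XiMat, Matrix.of_apply]
  rw [if_neg (by rintro ⟨h, -⟩; omega), if_neg (by rintro ⟨h, -⟩; omega), if_pos ⟨hk, hj⟩]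

lemma Xi_m1m1 {n m : ℕ} {γ : ℂ} {k j : Fin n} (hk : (k : ℕ) = m + 1) (hj : (j : ℕ) = m + 1) :
    XiMat n m γ k j = -(starRingEnd ℂ) γ * eC γ := by
  simp only [XiMat, Matrix.of_apply, eC]
  rw [if_neg (by rintro ⟨-, h⟩; omega), if_neg (by rintro ⟨h, -⟩; omega),
    if_neg (by rintro ⟨-, h⟩; omega), if_pos ⟨hk, hj⟩]

lemma Xi_diag {n m : ℕ} {γ : ℂ} {k j : Fin n} (h1 : (j : ℕ) ≠ m) (h2 : (j : ℕ) ≠ m + 1) :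
    XiMat n m γ k j = if k = j then 1 else 0 := by
  simp only [XiMat, Matrix.of_apply]
  rw [if_neg (fun h => h1 h.2), if_neg (fun h => h2 h.2), if_neg (fun h => h1 h.2),
    if_neg (fun h => h2 h.2)]

lemma Xi_zero {n m : ℕ} {γ : ℂ} {k j : Fin n} (h1 : (k : ℕ) ≠ m) (h2 : (k : ℕ) ≠ m + 1)
    (h3 : k ≠ j) : XiMat n m γ k j = 0 := by
  simp only [XiMat, Matrix.of_apply]
  rw [if_neg (fun h => h1 h.1), if_neg (fun h => h1 h.1), if_neg (fun h => h2 h.1),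
    if_neg (fun h => h2 h.1), if_neg h3]

lemma Qmat_col_lt {n m : ℕ} {γ : ℕ → ℂ} {i j : Fin n} (h : (j : ℕ) < m) :
    Qmat n γ m i j = if (i : ℕ) ≤ (j : ℕ) then Tf γ (i : ℕ) (j : ℕ) * γ (j : ℕ)
      else if (i : ℕ) = (j : ℕ) + 1 then (rho (γ (j : ℕ)) : ℂ) else 0 := by
  simp only [Qmat, Matrix.of_apply]; rw [if_pos h]

lemma Qmat_col_eq {n m : ℕ} {γ : ℕ → ℂ} {i j : Fin n} (h : (j : ℕ) = m) :
    Qmat n γ m i j = if (i : ℕ) ≤ m then Tf γ (i : ℕ) m else 0 := by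
  simp only [Qmat, Matrix.of_apply]
  rw [if_neg (show ¬(j : ℕ) < m by omega), if_pos h]

lemma Qmat_col_gt {n m : ℕ} {γ : ℕ → ℂ} {i j : Fin n} (h : m < (j : ℕ)) :
    Qmat n γ m i j = if i = j then 1 else 0 := by
  simp only [Qmat, Matrix.of_apply]
  rw [if_neg (show ¬(j : ℕ) < m by omega), if_neg (show ¬(j : ℕ) = m by omega)]

lemma Tf_succ (γ : ℕ → ℂ) {i m : ℕ} (h : i ≤ m) :
    Tf γ i (m + 1) = Tf γ i m * (eC (γ m) * (rho (γ m) : ℂ)) := by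
  rw [Tf, Tf, Finset.prod_Ico_succ_top h, mul_assoc]

lemma Tf_self_succ (γ : ℕ → ℂ) (m : ℕ) :
    Tf γ (m + 1) (m + 1) = -(starRingEnd ℂ) (γ m) * eC (γ m) := by
  rw [Tf, if_neg (Nat.succ_ne_zero m), Finset.Ico_self, Finset.prod_empty, mul_one,
    Nat.add_sub_cancel]

lemma Qmat_zero (n : ℕ) (γ : ℕ → ℂ) : Qmat n γ 0 = 1 := by
  funext i j
  show Qmat n γ 0 i j = (1 : Matrix (Fin n) (Fin n) ℂ) i j
  rw [Matrix.one_apply]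
  by_cases hj : (j : ℕ) = 0
  · rw [Qmat_col_eq hj]
    by_cases hi : (i : ℕ) ≤ 0
    · rw [if_pos hi, if_pos (show i = j from Fin.ext (by omega)),
        show (i : ℕ) = 0 by omega]
      simp [Tf]
    · rw [if_neg hi, if_neg (show ¬i = j by intro h; rw [Fin.ext_iff] at h; omega)]
  · rw [Qmat_col_gt (by omega)]

lemma Qmat_step (n : ℕ) (γ : ℕ → ℂ) (m : ℕ) (hm : m < n) :
    Qmat n γ m * XiMat n m (γ m) = Qmat n γ (m + 1) := by
  funext i j
  show (Qmat n γ m * XiMat n m (γ m)) i j = Qmat n γ (m + 1) i j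
  rw [Matrix.mul_apply]
  by_cases hjm : (j : ℕ) = m
  · -- column m
    by_cases h2 : m + 1 < n
    · have hv : ∀ k ∈ (Finset.univ : Finset (Fin n)),
          k ∉ ({(⟨m, hm⟩ : Fin n), ⟨m + 1, h2⟩} : Finset (Fin n)) →
          Qmat n γ m i k * XiMat n m (γ m) k j = 0 := by
        intro k _ hk
        simp only [Finset.mem_insert, Finset.mem_singleton] at hk
        push_neg at hk
        have hk1 : (k : ℕ) ≠ m := fun h => hk.1 (Fin.ext h)
        have hk2 : (k : ℕ) ≠ m + 1 := fun h => hk.2 (Fin.ext h)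
        rw [Xi_zero hk1 hk2 (fun h => hk1 (by rw [h]; exact hjm)), mul_zero]
      rw [← Finset.sum_subset (Finset.subset_univ _) hv,
        Finset.sum_pair (Fin.ne_of_val_ne (show m ≠ m + 1 by omega)),
        Xi_mm (m := m) rfl hjm, Xi_m1m (m := m) rfl hjm, Qmat_col_eq (m := m) rfl,
        Qmat_col_gt (show m < ((⟨m + 1, h2⟩ : Fin n) : ℕ) from Nat.lt_succ_self m),
        Qmat_col_lt (show (j : ℕ) < m + 1 by omega), hjm]
      by_cases hi : (i : ℕ) ≤ m
      · rw [if_pos hi, if_pos hi,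
          if_neg (show ¬i = ⟨m + 1, h2⟩ by
            intro h; rw [h] at hi; simp only [Fin.val_mk] at hi; omega)]
        ring
      · rw [if_neg hi, if_neg hi]
        by_cases hi2 : (i : ℕ) = m + 1
        · rw [if_pos (Fin.ext (by simpa using hi2)), if_pos hi2]; ring
        · rw [if_neg (fun h => hi2 (by simpa using congrArg Fin.val h)), if_neg hi2]; ring
    · -- m + 1 = n : only one support point
      have hv : ∀ k ∈ (Finset.univ : Finset (Fin n)),
          k ∉ ({(⟨m, hm⟩ : Fin n)} : Finset (Fin n)) →
          Qmat n γ m i k * XiMat n m (γ m) k j = 0 := by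
        intro k _ hk
        simp only [Finset.mem_singleton] at hk
        have hk1 : (k : ℕ) ≠ m := fun h => hk (Fin.ext h)
        have hk2 : (k : ℕ) ≠ m + 1 := by have := k.isLt; omega
        rw [Xi_zero hk1 hk2 (fun h => hk1 (by rw [h]; exact hjm)), mul_zero]
      rw [← Finset.sum_subset (Finset.subset_univ _) hv, Finset.sum_singleton,
        Xi_mm (m := m) rfl hjm, Qmat_col_eq (m := m) rfl, Qmat_col_lt (show (j : ℕ) < m + 1 by omega), hjm]
      by_cases hi : (i : ℕ) ≤ m
      · rw [if_pos hi, if_pos hi]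
      · rw [if_neg hi, if_neg hi, if_neg (show ¬(i : ℕ) = m + 1 by have := i.isLt; omega),
          zero_mul]
  · by_cases hjm1 : (j : ℕ) = m + 1
    · -- column m+1
      have h2 : m + 1 < n := hjm1 ▸ j.isLt
      have hv : ∀ k ∈ (Finset.univ : Finset (Fin n)),
          k ∉ ({(⟨m, hm⟩ : Fin n), j} : Finset (Fin n)) →
          Qmat n γ m i k * XiMat n m (γ m) k j = 0 := by
        intro k _ hk
        simp only [Finset.mem_insert, Finset.mem_singleton] at hk
        push_neg at hk
        have hk1 : (k : ℕ) ≠ m := fun h => hk.1 (Fin.ext h)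
        have hk2 : (k : ℕ) ≠ m + 1 := fun h => hk.2 (Fin.ext (by rw [h, hjm1]))
        rw [Xi_zero hk1 hk2 hk.2, mul_zero]
      rw [← Finset.sum_subset (Finset.subset_univ _) hv,
        Finset.sum_pair (Fin.ne_of_val_ne (by simp only [Fin.val_mk]; omega)),
        Xi_mm1 (m := m) rfl hjm1, Xi_m1m1 (m := m) hjm1 hjm1, Qmat_col_eq (m := m) rfl,
        Qmat_col_gt (show m < (j : ℕ) by omega), Qmat_col_eq hjm1]
      by_cases hi : (i : ℕ) ≤ m
      · rw [if_pos hi, if_pos (show (i : ℕ) ≤ m + 1 by omega),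
          if_neg (show ¬i = j by intro h; rw [h] at hi; omega),
          Tf_succ γ hi]
        ring
      · by_cases hi2 : (i : ℕ) = m + 1
        · rw [if_neg hi, if_pos (show i = j from Fin.ext (by rw [hi2, hjm1])),
            if_pos (show (i : ℕ) ≤ m + 1 by omega), hi2, Tf_self_succ]
          ring
        · rw [if_neg hi, if_neg (show ¬i = j by intro h; rw [h] at hi2; exact hi2 hjm1),
            if_neg (show ¬(i : ℕ) ≤ m + 1 by omega)]
          ring
    · -- other columns : Xi acts as the identity
      have hpt : ∀ k : Fin n, Qmat n γ m i k * XiMat n m (γ m) k j =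
          if k = j then Qmat n γ m i k else 0 := by
        intro k
        rw [Xi_diag hjm hjm1, mul_ite, mul_one, mul_zero]
      simp only [hpt]
      rw [Finset.sum_ite_eq' Finset.univ j, if_pos (Finset.mem_univ j)]
      by_cases hj : (j : ℕ) < m
      · rw [Qmat_col_lt hj, Qmat_col_lt (show (j : ℕ) < m + 1 by omega)]
      · rw [Qmat_col_gt (show m < (j : ℕ) by omega),
          Qmat_col_gt (show m + 1 < (j : ℕ) by omega)]

/-- **Theorem 2.12** (decomposition of the GGT matrix into elementary reflections):
if `α 0, …, α (n-1)` are Verblunsky coefficients (`|α k| < 1` for `k ≤ n-2`,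
`|α (n-1)| = 1`) and `γ 0, …, γ (n-1)` are the associated deformed Verblunsky
coefficients, then `G(α₀,…,α_{n-1}) = Ξ⁽⁰⁾(γ₀) ⋯ Ξ⁽ⁿ⁻¹⁾(γ_{n-1})`. -/
theorem ggt_eq_prod_reflections (n : ℕ) (hn : 1 ≤ n) (α : ℕ → ℂ)
    (h1 : ∀ k, k + 1 < n → ‖α k‖ < 1)
    (h2 : ‖α (n - 1)‖ = 1)
    (γ : ℕ → ℂ)
    (hγ : ∀ k < n, γ k = (starRingEnd ℂ) (α k) *
      ∏ j ∈ Finset.range k, (1 - (starRingEnd ℂ) (γ j)) / (1 - γ j)) :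
    GGT n α = ((List.range n).map fun k => XiMat n k (γ k)).prod := by
  have hprod : ∀ m, m ≤ n →
      ((List.range m).map fun k => XiMat n k (γ k)).prod = Qmat n γ m := by
    intro m
    induction m with
    | zero => intro _; rw [List.range_zero, List.map_nil, List.prod_nil, Qmat_zero]
    | succ m ih =>
      intro h
      rw [List.range_succ, List.map_append, List.prod_append, ih (by omega),
        List.map_cons, List.map_nil, List.prod_cons, List.prod_nil, mul_one,
        Qmat_step n γ m (by omega)]
  rw [hprod n le_rfl]
  -- analytic preliminaries
  have hne1 : ∀ z : ℂ, ‖z‖ < 1 → (1 : ℂ) - z ≠ 0 := by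
    intro z hz h
    rw [sub_eq_zero] at h
    rw [← h] at hz
    simp at hz
  have hne2 : ∀ z : ℂ, ‖z‖ < 1 → (1 : ℂ) - (starRingEnd ℂ) z ≠ 0 := by
    intro z hz
    exact hne1 _ (by rwa [Complex.norm_conj])
  have key_abs : ∀ z : ℂ, ‖z‖ < 1 →
      ‖(1 - (starRingEnd ℂ) z) / (1 - z)‖ = 1 := by
    intro z hz
    rw [norm_div]
    have hc : (1 : ℂ) - (starRingEnd ℂ) z = (starRingEnd ℂ) (1 - z) := by
      rw [map_sub, map_one]
    rw [hc, Complex.norm_conj, div_self (norm_ne_zero_iff.mpr (hne1 z hz))]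
  have habs : ∀ k, k < n → ‖γ k‖ = ‖α k‖ := by
    intro k
    induction k using Nat.strong_induction_on with
    | _ k ih =>
      intro hk
      rw [hγ k hk, norm_mul, Complex.norm_conj]
      have hone : ‖∏ j ∈ Finset.range k,
          (1 - (starRingEnd ℂ) (γ j)) / (1 - γ j)‖ = 1 := by
        rw [norm_prod]
        refine Finset.prod_eq_one fun j hj => ?_
        have hjk := Finset.mem_range.mp hj
        refine key_abs (γ j) ?_
        rw [ih j hjk (by omega)]
        exact h1 j (by omega)
      rw [hone, mul_one]
  have hγlt : ∀ j, j + 1 < n → ‖γ j‖ < 1 := by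
    intro j hj
    rw [habs j (by omega)]
    exact h1 j hj
  have hconj_e : ∀ z : ℂ, ‖z‖ < 1 → (starRingEnd ℂ) (eC z) * eC z = 1 := by
    intro z hz
    simp only [eC, map_div₀, map_sub, map_one, Complex.conj_conj]
    rw [div_mul_div_comm, mul_comm ((1 : ℂ) - (starRingEnd ℂ) z) ((1 : ℂ) - z)]
    exact div_self (mul_ne_zero (hne1 z hz) (hne2 z hz))
  have hαe : ∀ k, k < n →
      (starRingEnd ℂ) (α k) = γ k * ∏ j ∈ Finset.range k, eC (γ j) := by
    intro k hk
    rw [hγ k hk, mul_assoc, ← Finset.prod_mul_distrib]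
    have hone : ∀ j ∈ Finset.range k,
        (1 - (starRingEnd ℂ) (γ j)) / (1 - γ j) * eC (γ j) = 1 := by
      intro j hj
      have hjk := Finset.mem_range.mp hj
      have hlt : ‖γ j‖ < 1 := hγlt j (by omega)
      rw [eC, div_mul_div_comm,
        mul_comm ((1 : ℂ) - γ j) ((1 : ℂ) - (starRingEnd ℂ) (γ j)),
        div_self (mul_ne_zero (hne2 _ hlt) (hne1 _ hlt))]
    rw [Finset.prod_congr rfl hone, Finset.prod_const_one, mul_one]
  have hrho : ∀ p, p < n → rho (γ p) = rho (α p) := by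
    intro p hp
    rw [rho, rho, habs p hp]
  -- entrywise identification of `GGT n α` with `Qmat n γ n`
  funext i j
  show GGT n α i j = Qmat n γ n i j
  rw [Qmat_col_lt j.isLt]
  simp only [GGT, Matrix.of_apply]
  have hρprod : ∀ a : ℕ, (∏ p ∈ Finset.Ico a (j : ℕ), ((rho (α p) : ℂ))) =
      ∏ p ∈ Finset.Ico a (j : ℕ), ((rho (γ p) : ℂ)) := by
    intro a
    refine Finset.prod_congr rfl fun p hp => ?_
    have := (Finset.mem_Ico.mp hp).2
    rw [hrho p (by have := j.isLt; omega)]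
  by_cases hij : (i : ℕ) ≤ (j : ℕ)
  · rw [if_pos hij, if_pos hij]
    by_cases hi0 : (i : ℕ) = 0
    · rw [if_pos hi0, hαe (j : ℕ) j.isLt, hρprod, hi0]
      simp only [Tf, if_true]
      rw [Finset.prod_mul_distrib, Finset.range_eq_Ico]
      ring
    · rw [if_neg hi0]
      simp only [Tf]
      rw [if_neg hi0]
      set i' := (i : ℕ) - 1 with hi'def
      have hii : (i : ℕ) = i' + 1 := by omega
      have hi'n : i' < n := by have := j.isLt; omega
      have hαi : α i' = (starRingEnd ℂ) (γ i') *
          ∏ p ∈ Finset.range i', (starRingEnd ℂ) (eC (γ p)) := by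
        have h := hαe i' hi'n
        have hcc : α i' = (starRingEnd ℂ) ((starRingEnd ℂ) (α i')) := (Complex.conj_conj _).symm
        rw [hcc, h, map_mul, map_prod]
      have hsplit : (∏ p ∈ Finset.range (j : ℕ), eC (γ p)) =
          (∏ p ∈ Finset.range i', eC (γ p)) *
            (eC (γ i') * ∏ p ∈ Finset.Ico (i : ℕ) (j : ℕ), eC (γ p)) := by
        rw [Finset.range_eq_Ico,
          ← Finset.prod_Ico_consecutive (fun p => eC (γ p)) (Nat.zero_le i')
            (show i' ≤ (j : ℕ) by omega),
          Finset.prod_eq_prod_Ico_succ_bot (show i' < (j : ℕ) by omega), ← hii,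
          ← Finset.range_eq_Ico]
      have hcancel : (∏ p ∈ Finset.range i', (starRingEnd ℂ) (eC (γ p))) *
          (∏ p ∈ Finset.range i', eC (γ p)) = 1 := by
        rw [← Finset.prod_mul_distrib]
        refine Finset.prod_eq_one fun p hp => ?_
        have hpk := Finset.mem_range.mp hp
        exact hconj_e (γ p) (hγlt p (by have := j.isLt; omega))
      rw [hαe (j : ℕ) j.isLt, hαi, hρprod, hsplit, Finset.prod_mul_distrib]
      set Pc := ∏ p ∈ Finset.range i', (starRingEnd ℂ) (eC (γ p)) with hPc
      set Pe := ∏ p ∈ Finset.range i', eC (γ p) with hPe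
      set Pej := ∏ p ∈ Finset.Ico (i : ℕ) (j : ℕ), eC (γ p) with hPej
      set Pρ := ∏ p ∈ Finset.Ico (i : ℕ) (j : ℕ), ((rho (γ p) : ℂ)) with hPρ
      linear_combination (-(starRingEnd ℂ) (γ i') * eC (γ i') * (Pej * Pρ) * γ (j : ℕ)) *
        hcancel
  · rw [if_neg hij, if_neg hij]
    by_cases hij1 : (i : ℕ) = (j : ℕ) + 1
    · rw [if_pos hij1, if_pos hij1, hrho (j : ℕ) j.isLt]
    · rw [if_neg hij1, if_neg hij1]
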